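/- For λ > 0 define the power-minimization optimal value P(λ) = inf { Re tr(E_0 X) : X Hermitian positive semidefinite, f_i(X) ≥ λ γ_i g_i(X) for all i = 1,…,N }. Let 0 < λ < λ' and suppose P(λ') is attained at some feasible X' (i.e. X' is Hermitian PSD, f_i(X') ≥ λ' γ_i g_i(X') for all i, and Re tr(E_0 X') = P(λ')) with Re tr(E_0 X') > 0. Then the matrix (λ/λ')·X' is feasible for the problem with parameter λ, and consequently P(λ) ≤ (λ/λ')·P(λ') < P(λ'); that is, P(λ) is strictly increasing in λ. -/

import Mathlib

open Matrix ComplexOrder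

open scoped MatrixOrder in
lemma trace_mul_re_nonneg {n : Type*} [Fintype n] [DecidableEq n]
    {A B : Matrix n n ℂ} (hA : A.PosSemidef) (hB : B.PosSemidef) :
    0 ≤ (Matrix.trace (A * B)).re := by
  have hs := (CFC.sqrt_nonneg A).posSemidef
  have h1 : Matrix.trace (CFC.sqrt A * B * CFC.sqrt A) = Matrix.trace (A * B) := by
    rw [Matrix.trace_mul_cycle, CFC.sqrt_mul_sqrt_self A hA.nonneg]
  have hpsd : (CFC.sqrt A * B * CFC.sqrt A).PosSemidef := by
    have := hB.conjTranspose_mul_mul_same (CFC.sqrt A)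
    rwa [hs.1] at this
  have htr : 0 ≤ Matrix.trace (CFC.sqrt A * B * CFC.sqrt A) := by
    apply Finset.sum_nonneg
    intro i _
    simpa [dotProduct, Pi.single_apply, Finset.sum_ite_eq] using hpsd.dotProduct_mulVec_nonneg (Pi.single i 1)
  rw [← h1]
  exact (Complex.le_def.mp htr).1

/-- Strict monotonicity of the power-minimization optimal value `P(λ)` in the SINR scaling
parameter `λ`: if `0 < λ < λ'` and `P(λ')` is attained at a feasible `X'` with
`Re tr(E0 X') = P(λ') > 0`, then `(λ/λ') • X'` is feasible for the problem with parameter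
`λ`, and consequently `P(λ) ≤ (λ/λ')·P(λ') < P(λ')`. -/
theorem stmt2 {M N : ℕ} (hM : 0 < M) (hN : 0 < N)
    (E1 E2 : Fin N → Matrix (Fin M) (Fin M) ℂ)
    (hE1 : ∀ i, (E1 i).PosSemidef) (hE2 : ∀ i, (E2 i).PosSemidef)
    (E0 : Matrix (Fin M) (Fin M) ℂ) (hE0 : E0.PosSemidef)
    (γ σ : Fin N → ℝ) (hγ : ∀ i, 0 < γ i) (hσ : ∀ i, 0 < σ i)
    (lam lam' Pl Pl' : ℝ) (hlam : 0 < lam) (hll' : lam < lam')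
    -- `P(λ')` is attained at the feasible point `X'`
    (X' : Matrix (Fin M) (Fin M) ℂ) (hX'PSD : X'.PosSemidef)
    (hX'feas : ∀ i, (Matrix.trace (E1 i * X')).re ≥
        lam' * (γ i * ((Matrix.trace (E2 i * X')).re + σ i ^ 2)))
    (hX'val : (Matrix.trace (E0 * X')).re = Pl')
    (hPl'pos : 0 < Pl')
    -- `Pl = P(λ)` is a lower bound of the cost over the feasible set for parameter `λ`
    (hPl : ∀ X : Matrix (Fin M) (Fin M) ℂ, X.PosSemidef →
        (∀ i, (Matrix.trace (E1 i * X)).re ≥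
          lam * (γ i * ((Matrix.trace (E2 i * X)).re + σ i ^ 2))) →
        Pl ≤ (Matrix.trace (E0 * X)).re) :
    (((lam / lam' : ℝ) : ℂ) • X').PosSemidef ∧
    (∀ i, (Matrix.trace (E1 i * (((lam / lam' : ℝ) : ℂ) • X'))).re ≥
        lam * (γ i * ((Matrix.trace (E2 i * (((lam / lam' : ℝ) : ℂ) • X'))).re + σ i ^ 2))) ∧
    Pl ≤ (lam / lam') * Pl' ∧ (lam / lam') * Pl' < Pl' := by
  set c : ℝ := lam / lam' with hc
  have hlam' : 0 < lam' := hlam.trans hll'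
  have hc0 : 0 < c := div_pos hlam hlam'
  have hc1 : c < 1 := (div_lt_one hlam').mpr hll'
  have hclam : c * lam' = lam := div_mul_cancel₀ lam hlam'.ne'
  -- PSD
  have hpsd : (((c : ℝ) : ℂ) • X').PosSemidef := by
    refine .of_dotProduct_mulVec_nonneg ?_ ?_
    · unfold Matrix.IsHermitian
      rw [conjTranspose_smul, hX'PSD.1]
      congr 1
      simp
    · intro x
      have := hX'PSD.dotProduct_mulVec_nonneg x
      rw [Matrix.smul_mulVec, dotProduct_smul, smul_eq_mul]
      exact mul_nonneg (by exact_mod_cast hc0.le) this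
  -- trace scaling
  have key : ∀ E : Matrix (Fin M) (Fin M) ℂ,
      (Matrix.trace (E * (((c : ℝ) : ℂ) • X'))).re = c * (Matrix.trace (E * X')).re := by
    intro E
    rw [Matrix.mul_smul, Matrix.trace_smul, smul_eq_mul, Complex.mul_re]
    simp
  have feas : ∀ i, (Matrix.trace (E1 i * (((c : ℝ) : ℂ) • X'))).re ≥
      lam * (γ i * ((Matrix.trace (E2 i * (((c : ℝ) : ℂ) • X'))).re + σ i ^ 2)) := by
    intro i
    set f := (Matrix.trace (E1 i * X')).re with hfdef
    set g := (Matrix.trace (E2 i * X')).re with hgdef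
    have hg : 0 ≤ g := trace_mul_re_nonneg (hE2 i) hX'PSD
    have hf : f ≥ lam' * (γ i * (g + σ i ^ 2)) := hX'feas i
    rw [key, key]
    have h1 : c * (lam' * (γ i * (g + σ i ^ 2))) ≤ c * f :=
      mul_le_mul_of_nonneg_left hf hc0.le
    have h2 : c * (lam' * (γ i * (g + σ i ^ 2))) = lam * (γ i * (g + σ i ^ 2)) := by
      rw [← mul_assoc, hclam]
    have h3 : lam * (γ i * (c * g + σ i ^ 2)) ≤ lam * (γ i * (g + σ i ^ 2)) := by
      have hcg : c * g ≤ g := by nlinarith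
      have := mul_le_mul_of_nonneg_left (add_le_add_left hcg (σ i ^ 2)) (hγ i).le
      exact mul_le_mul_of_nonneg_left this hlam.le
    linarith
  refine ⟨hpsd, feas, ?_, ?_⟩
  · have := hPl _ hpsd feas
    rwa [key, hX'val] at this
  · nlinarith
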